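/- arXiv:1112.3839 — 4 statements merged into one kernel-verified Lean document; each statement's English description precedes it below -/
import Mathlib

section
/- If X is a symmetric positive definite matrix with X ≥ I and B is an invertible square matrix, then X − X B (I + Bᵀ X B)⁻¹ Bᵀ X = (X⁻¹ + B Bᵀ)⁻¹ < B⁻ᵀ B⁻¹ (in the Loewner order). -/
open Matrix

lemma posDef_conj_aux {n : Type*} [Fintype n] [DecidableEq n]
    {A : Matrix n n ℝ} (hA : A.PosDef) {C : Matrix n n ℝ} (hC : IsUnit C) :
    (Cᵀ * A * C).PosDef := by
  have hCt : Cᵀ = Cᴴ := by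
    ext i j; simp [conjTranspose_apply]
  refine PosDef.of_dotProduct_mulVec_pos ?_ ?_
  · rw [hCt]
    exact isHermitian_conjTranspose_mul_mul C hA.isHermitian
  · intro x hx
    have hCx : C *ᵥ x ≠ 0 := by
      intro h
      have := (mulVec_injective_iff_isUnit.2 hC) (a₁ := x) (a₂ := 0)
      simp only [mulVec_zero] at this
      exact hx (this h)
    have := hA.dotProduct_mulVec_pos hCx
    rw [hCt]
    simpa only [star_mulVec, dotProduct_mulVec, vecMul_vecMul] using this

theorem riccati_step_bound {n : Type*} [Fintype n] [DecidableEq n]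
    (X B : Matrix n n ℝ) (hX : X.PosDef) (hXI : (X - 1).PosSemidef)
    (hB : IsUnit B.det) :
    X - X * B * (1 + Bᵀ * X * B)⁻¹ * Bᵀ * X = (X⁻¹ + B * Bᵀ)⁻¹ ∧
    ((B⁻¹)ᵀ * B⁻¹ - (X⁻¹ + B * Bᵀ)⁻¹).PosDef := by
  have hBu : IsUnit B := (isUnit_iff_isUnit_det B).2 hB
  have hBtu : IsUnit Bᵀ := (isUnit_iff_isUnit_det Bᵀ).2 (by rwa [det_transpose])
  have hXu : IsUnit X := hX.isUnit
  have hXd : IsUnit X.det := (isUnit_iff_isUnit_det X).1 hXu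
  have hXinv : (X⁻¹).PosDef := hX.inv
  set M : Matrix n n ℝ := B * Bᵀ with hMdef
  have hM : M.PosDef := by
    have : (Bᵀᵀ * 1 * Bᵀ).PosDef := posDef_conj_aux Matrix.PosDef.one hBtu
    simpa [hMdef] using this
  have hMu : IsUnit M := hBu.mul hBtu
  have hMsymm : Mᵀ = M := by simp [hMdef, Matrix.transpose_mul]
  have hMinvsymm : (M⁻¹)ᵀ = M⁻¹ := by rw [transpose_nonsing_inv, hMsymm]
  have hXinvinv : (X⁻¹)⁻¹ = X := nonsing_inv_nonsing_inv X hXd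
  -- Part 1: Woodbury
  have h1 : (1 + Bᵀ * X * B).PosDef :=
    Matrix.PosDef.one.add_posSemidef (posDef_conj_aux hX hBu).posSemidef
  have hW := Matrix.add_mul_mul_inv_eq_sub (A := X⁻¹) (U := B) (C := 1) (V := Bᵀ)
    hXinv.isUnit isUnit_one (by rw [inv_one, hXinvinv]; exact h1.isUnit)
  rw [inv_one, hXinvinv, mul_one] at hW
  refine ⟨hW.symm, ?_⟩
  -- Part 2
  have hXM : (X + M⁻¹).PosDef := hX.add_posSemidef hM.inv.posSemidef
  have hW2 := Matrix.add_mul_mul_inv_eq_sub (A := M) (U := (1 : Matrix n n ℝ))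
    (C := X⁻¹) (V := (1 : Matrix n n ℝ)) hMu hXinv.isUnit
    (by rw [hXinvinv, one_mul, mul_one]; exact hXM.isUnit)
  simp only [hXinvinv, one_mul, mul_one] at hW2
  have hBB : (B⁻¹)ᵀ * B⁻¹ = M⁻¹ := by
    rw [hMdef, Matrix.mul_inv_rev, transpose_nonsing_inv]
  have hrw : (B⁻¹)ᵀ * B⁻¹ - (X⁻¹ + M)⁻¹ = (M⁻¹)ᵀ * (X + M⁻¹)⁻¹ * M⁻¹ := by
    rw [hBB, hMinvsymm, add_comm X⁻¹ M, hW2, sub_sub_cancel]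
  rw [hrw]
  exact posDef_conj_aux hXM.inv hM.inv.isUnit
end

section
/- Let X solve the discrete algebraic Riccati equation X = AᵀXA − AᵀXB(I + BᵀXB)⁻¹BᵀXA + I with B invertible. Then X − I ≥ (σ_min(B)²/(σ_min(B)² + 1)) AᵀB⁻ᵀB⁻¹A in the Loewner order. -/
open Matrix

section Aux

variable {n : Type*} [Fintype n] [DecidableEq n]

lemma psdSmul {c : ℝ} (hc : 0 ≤ c) {M : Matrix n n ℝ} (hM : M.PosSemidef) :
    (c • M).PosSemidef := by
  constructor
  · unfold Matrix.IsHermitian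
    rw [conjTranspose_smul, hM.1.eq]
    simp
  · exact (hM.smul hc).2

lemma psdConj {M : Matrix n n ℝ} (hM : M.PosSemidef) (C : Matrix n n ℝ) :
    (C * M * Cᵀ).PosSemidef := by
  have := hM.mul_mul_conjTranspose_same C
  rwa [conjTranspose_eq_transpose_of_trivial] at this

lemma herm_sub_inf_smul [Nonempty n] {H : Matrix n n ℝ} (hH : H.IsHermitian) :
    (H - (⨅ i, hH.eigenvalues i) • 1).PosSemidef := by
  set s := ⨅ i, hH.eigenvalues i with hs
  have hle : ∀ i, s ≤ hH.eigenvalues i := fun i => ciInf_le (Finite.bddBelow_range _) i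
  set U := (hH.eigenvectorUnitary : Matrix n n ℝ) with hUdef
  have hUU : U * star U = 1 := (Matrix.mem_unitaryGroup_iff).mp hH.eigenvectorUnitary.2
  have key : H - s • 1 = U * Matrix.diagonal (fun i => hH.eigenvalues i - s) * star U := by
    have hsp := hH.spectral_theorem
    rw [Unitary.conjStarAlgAut_apply] at hsp
    have hdiag : Matrix.diagonal (fun i => hH.eigenvalues i - s)
        = Matrix.diagonal (RCLike.ofReal ∘ hH.eigenvalues) - s • 1 := by
      rw [smul_one_eq_diagonal, ← diagonal_sub]
      congr 1
    rw [hdiag, Matrix.mul_sub, Matrix.sub_mul, Matrix.mul_smul, Matrix.smul_mul,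
      Matrix.mul_one, hUU, hUdef, ← hsp]
  rw [key]
  have hd : (Matrix.diagonal (fun i => hH.eigenvalues i - s)).PosSemidef :=
    Matrix.PosSemidef.diagonal (fun i => sub_nonneg.mpr (hle i))
  have := hd.mul_mul_conjTranspose_same U
  rwa [← star_eq_conjTranspose] at this

lemma inv_sub_smul_psd {S : Matrix n n ℝ} (hS : S.PosDef) {t : ℝ} (ht : 0 < t)
    (h : (t • 1 - S).PosSemidef) : (S⁻¹ - t⁻¹ • 1).PosSemidef := by
  have hSdet : IsUnit S.det := hS.det_pos.ne'.isUnit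
  have hSinv : (S⁻¹).PosDef := hS.inv
  obtain ⟨R, hRps, hRR⟩ : ∃ R : Matrix n n ℝ, R.PosSemidef ∧ R * R = S⁻¹ := by
    open scoped MatrixOrder in
    exact ⟨CFC.sqrt S⁻¹, (CFC.sqrt_nonneg _).posSemidef,
      CFC.sqrt_mul_sqrt_self _ hSinv.posSemidef.nonneg⟩
  have hRdet : IsUnit R.det := by
    have h2 : IsUnit (R.det * R.det) := by
      rw [← Matrix.det_mul, hRR]
      exact S.isUnit_nonsing_inv_det hSdet
    exact isUnit_of_mul_isUnit_left h2
  have hSRR : S = R⁻¹ * R⁻¹ := by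
    rw [← Matrix.mul_inv_rev, hRR, Matrix.nonsing_inv_nonsing_inv _ hSdet]
  have hRSR : R * S * R = 1 := by
    rw [hSRR, Matrix.mul_assoc, Matrix.mul_assoc, Matrix.nonsing_inv_mul _ hRdet, Matrix.mul_one,
      Matrix.mul_nonsing_inv _ hRdet]
  have key : S⁻¹ - t⁻¹ • 1 = t⁻¹ • (R * (t • 1 - S) * R) := by
    rw [Matrix.mul_sub, Matrix.sub_mul, hRSR, Matrix.mul_smul, Matrix.smul_mul,
      Matrix.mul_one, hRR, smul_sub, smul_smul, inv_mul_cancel₀ ht.ne', one_smul]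
  rw [key]
  refine psdSmul (by positivity) ?_
  have h3 := h.mul_mul_conjTranspose_same R
  rwa [hRps.1.eq] at h3

lemma smul_sub_inv_psd {S : Matrix n n ℝ} (hS : S.PosDef) {t : ℝ} (ht : 0 < t)
    (h : (S - t • 1).PosSemidef) : (t⁻¹ • 1 - S⁻¹).PosSemidef := by
  have hSdet : IsUnit S.det := hS.det_pos.ne'.isUnit
  have hSinv : (S⁻¹).PosDef := hS.inv
  obtain ⟨R, hRps, hRR⟩ : ∃ R : Matrix n n ℝ, R.PosSemidef ∧ R * R = S⁻¹ := by
    open scoped MatrixOrder in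
    exact ⟨CFC.sqrt S⁻¹, (CFC.sqrt_nonneg _).posSemidef,
      CFC.sqrt_mul_sqrt_self _ hSinv.posSemidef.nonneg⟩
  have hRdet : IsUnit R.det := by
    have h2 : IsUnit (R.det * R.det) := by
      rw [← Matrix.det_mul, hRR]
      exact S.isUnit_nonsing_inv_det hSdet
    exact isUnit_of_mul_isUnit_left h2
  have hSRR : S = R⁻¹ * R⁻¹ := by
    rw [← Matrix.mul_inv_rev, hRR, Matrix.nonsing_inv_nonsing_inv _ hSdet]
  have hRSR : R * S * R = 1 := by
    rw [hSRR, Matrix.mul_assoc, Matrix.mul_assoc, Matrix.nonsing_inv_mul _ hRdet, Matrix.mul_one,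
      Matrix.mul_nonsing_inv _ hRdet]
  have key : t⁻¹ • 1 - S⁻¹ = t⁻¹ • (R * (S - t • 1) * R) := by
    rw [Matrix.mul_sub, Matrix.sub_mul, hRSR, Matrix.mul_smul, Matrix.smul_mul,
      Matrix.mul_one, hRR, smul_sub, smul_smul, inv_mul_cancel₀ ht.ne', one_smul]
  rw [key]
  refine psdSmul (by positivity) ?_
  have h3 := h.mul_mul_conjTranspose_same R
  rwa [hRps.1.eq] at h3

end Aux

theorem riccati_loewner_bound {n : Type*} [Fintype n] [DecidableEq n] [Nonempty n]
    (A B X : Matrix n n ℝ) (hB : IsUnit B.det) (hX : X.PosDef)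
    (hric : X = Aᵀ * X * A - Aᵀ * X * B * (1 + Bᵀ * X * B)⁻¹ * Bᵀ * X * A + 1)
    (hBB : (Bᵀ * B).IsHermitian) :
    (X - 1 - ((⨅ i, hBB.eigenvalues i) / ((⨅ i, hBB.eigenvalues i) + 1)) •
      (Aᵀ * (B⁻¹)ᵀ * B⁻¹ * A)).PosSemidef := by
  set s := ⨅ i, hBB.eigenvalues i with hsdef
  -- basic invertibility facts
  have hXdet : IsUnit X.det := hX.det_pos.ne'.isUnit
  have hX1 : X⁻¹ * X = 1 := Matrix.nonsing_inv_mul X hXdet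
  have hBl : B⁻¹ * B = 1 := Matrix.nonsing_inv_mul B hB
  have hBr : B * B⁻¹ = 1 := Matrix.mul_nonsing_inv B hB
  have hBt : (B⁻¹)ᵀ * Bᵀ = 1 := by
    rw [← Matrix.transpose_mul, hBr, Matrix.transpose_one]
  -- G := 1 + BᵀXB is positive definite
  set G := 1 + Bᵀ * X * B with hGdef
  have hBXB : (Bᵀ * X * B).PosSemidef := by
    have := psdConj hX.posSemidef Bᵀ
    rwa [Matrix.transpose_transpose] at this
  have hG : G.PosDef := Matrix.PosDef.add_posSemidef Matrix.PosDef.one hBXB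
  have hGdet : IsUnit G.det := hG.det_pos.ne'.isUnit
  have hGr : G * G⁻¹ = 1 := Matrix.mul_nonsing_inv G hGdet
  have h2 : Bᵀ * X * B * G⁻¹ = 1 - G⁻¹ := by
    have : (1 + Bᵀ * X * B) * G⁻¹ = 1 := hGr
    rw [Matrix.add_mul, Matrix.one_mul] at this
    linear_combination (norm := noncomm_ring) this
  -- W := X⁻¹ + BBᵀ is positive definite
  set W := X⁻¹ + B * Bᵀ with hWdef
  have hBBt : (B * Bᵀ).PosSemidef := by
    have := psdConj Matrix.PosSemidef.one B
    rwa [Matrix.mul_one] at this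
  have hW : W.PosDef := Matrix.PosDef.add_posSemidef hX.inv hBBt
  have hWdet : IsUnit W.det := hW.det_pos.ne'.isUnit
  -- Woodbury: X - X*B*G⁻¹*Bᵀ*X = W⁻¹
  have hprod : W * (X - X * B * G⁻¹ * Bᵀ * X) = 1 := by
    have expand : (X⁻¹ + B * Bᵀ) * (X - X * B * G⁻¹ * Bᵀ * X)
        = X⁻¹ * X - (X⁻¹ * X) * (B * (G⁻¹ * (Bᵀ * X))) + B * (Bᵀ * X)
          - B * ((Bᵀ * X * B * G⁻¹) * (Bᵀ * X)) := by noncomm_ring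
    rw [hWdef, expand, hX1, h2]
    noncomm_ring
  have hWood : W⁻¹ = X - X * B * G⁻¹ * Bᵀ * X := Matrix.inv_eq_right_inv hprod
  -- Step A : X - 1 = Aᵀ * W⁻¹ * A
  have hStepA : X - 1 = Aᵀ * W⁻¹ * A := by
    rw [hWood]
    conv_lhs => rw [hric]
    noncomm_ring
  -- X - 1 is PSD
  have hXm1 : (X - 1).PosSemidef := by
    rw [hStepA]
    have := psdConj hW.inv.posSemidef Aᵀ
    rwa [Matrix.transpose_transpose] at this
  -- 1 - X⁻¹ PSD
  have hXinvle : ((1 : Matrix n n ℝ) - X⁻¹).PosSemidef := by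
    have h1 : (X - (1:ℝ) • 1).PosSemidef := by simpa using hXm1
    have := smul_sub_inv_psd hX one_pos h1
    simpa using this
  -- BᵀB PosDef and s > 0
  have hBtB : (Bᵀ * B).PosDef := by
    refine Matrix.PosDef.of_dotProduct_mulVec_pos hBB fun x hx => ?_
    have hmv : (Bᵀ * B) *ᵥ x = Bᵀ *ᵥ (B *ᵥ x) := by rw [← Matrix.mulVec_mulVec]
    rw [hmv, Matrix.dotProduct_mulVec, Matrix.vecMul_transpose]
    have hBx : B *ᵥ x ≠ 0 := by
      have hinj : Function.Injective (B.mulVec) := Matrix.mulVec_injective_iff_isUnit.mpr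
        (Matrix.isUnit_iff_isUnit_det B |>.mpr hB)
      intro hz
      apply hx
      apply hinj
      simpa using hz
    have := Matrix.dotProduct_star_self_pos_iff (v := B *ᵥ x) |>.mpr hBx
    simpa using this
  have hs_pos : 0 < s := by
    obtain ⟨i0, hi0⟩ := Finite.exists_min hBB.eigenvalues
    have : s = hBB.eigenvalues i0 :=
      le_antisymm (ciInf_le (Finite.bddBelow_range _) i0) (le_ciInf hi0)
    rw [this]
    exact hBtB.eigenvalues_pos i0
  -- gap : BᵀB - s•1 PSD
  have hgap : (Bᵀ * B - s • 1).PosSemidef := herm_sub_inf_smul hBB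
  -- s⁻¹•1 - B⁻¹(B⁻¹)ᵀ PSD
  have hBinvBound : (s⁻¹ • 1 - B⁻¹ * (B⁻¹)ᵀ).PosSemidef := by
    have := smul_sub_inv_psd hBtB hs_pos hgap
    have hinv : (Bᵀ * B)⁻¹ = B⁻¹ * (B⁻¹)ᵀ := by
      rw [Matrix.mul_inv_rev, ← Matrix.transpose_nonsing_inv]
    rwa [hinv] at this
  -- M := B⁻¹ X⁻¹ (B⁻¹)ᵀ
  set M := B⁻¹ * X⁻¹ * (B⁻¹)ᵀ with hMdef
  have hMpsd : M.PosSemidef := psdConj hX.inv.posSemidef B⁻¹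
  have hM1 : (M + 1).PosDef := Matrix.PosDef.posSemidef_add hMpsd Matrix.PosDef.one
  -- s⁻¹•1 - M PSD
  have hMbound : (s⁻¹ • (1 : Matrix n n ℝ) - M).PosSemidef := by
    have hc : (B⁻¹ * ((1 : Matrix n n ℝ) - X⁻¹) * (B⁻¹)ᵀ).PosSemidef := psdConj hXinvle B⁻¹
    have heq : B⁻¹ * ((1 : Matrix n n ℝ) - X⁻¹) * (B⁻¹)ᵀ = B⁻¹ * (B⁻¹)ᵀ - M := by
      rw [hMdef]; noncomm_ring
    rw [heq] at hc
    have := hBinvBound.add hc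
    rwa [sub_add_sub_cancel] at this
  -- bracket : (M+1)⁻¹ - (s/(s+1))•1 PSD
  have hbracket : ((M + 1)⁻¹ - (s / (s + 1)) • (1 : Matrix n n ℝ)).PosSemidef := by
    have ht : (0:ℝ) < s⁻¹ + 1 := by positivity
    have hsub : ((s⁻¹ + 1) • (1 : Matrix n n ℝ) - (M + 1)).PosSemidef := by
      have : (s⁻¹ + 1) • (1 : Matrix n n ℝ) - (M + 1) = s⁻¹ • (1 : Matrix n n ℝ) - M := by
        rw [add_smul, one_smul]; abel
      rw [this]; exact hMbound
    have := inv_sub_smul_psd hM1 ht hsub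
    have hti : (s⁻¹ + 1)⁻¹ = s / (s + 1) := by
      field_simp
      ring
    rwa [hti] at this
  -- W = B (M+1) Bᵀ and W⁻¹ = (B⁻¹)ᵀ (M+1)⁻¹ B⁻¹
  have hWeq : W = B * (M + 1) * Bᵀ := by
    have e1 : B * (B⁻¹ * X⁻¹ * (B⁻¹)ᵀ + 1) * Bᵀ
        = (B * B⁻¹) * (X⁻¹ * ((B⁻¹)ᵀ * Bᵀ)) + B * Bᵀ := by noncomm_ring
    rw [hWdef, hMdef, e1, hBr, hBt, Matrix.one_mul, Matrix.mul_one]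
  have hWinv : W⁻¹ = (B⁻¹)ᵀ * (M + 1)⁻¹ * B⁻¹ := by
    rw [hWeq, Matrix.mul_inv_rev, Matrix.mul_inv_rev, ← Matrix.transpose_nonsing_inv,
      Matrix.mul_assoc]
  -- assemble
  have hfinal : X - 1 - (s / (s + 1)) • (Aᵀ * (B⁻¹)ᵀ * B⁻¹ * A)
      = (Aᵀ * (B⁻¹)ᵀ) * ((M + 1)⁻¹ - (s / (s + 1)) • (1 : Matrix n n ℝ)) * (Aᵀ * (B⁻¹)ᵀ)ᵀ := by
    rw [hStepA, hWinv, Matrix.transpose_mul, Matrix.transpose_transpose]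
    simp only [Matrix.mul_sub, Matrix.sub_mul, Matrix.mul_smul, Matrix.smul_mul,
      Matrix.mul_one, Matrix.one_mul, Matrix.mul_assoc, Matrix.transpose_transpose]
  rw [hfinal]
  exact psdConj hbracket (Aᵀ * (B⁻¹)ᵀ)
end

section
/- Let n ≥ 2, let i ≠ j, A = e_i e_jᵀ (a rank-one matrix with a single nonzero entry 1 in position (i,j)), and ε > 0. Then X = I + (1/(1+ε²)) e_j e_jᵀ is the unique positive definite solution of the discrete algebraic Riccati equation Aᵀ X A − Aᵀ X (εI)(I + (εI)ᵀ X (εI))⁻¹ (εI)ᵀ X A = X − I. -/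
open Matrix

section Aux

variable {n : Type*} [Fintype n] [DecidableEq n]

lemma stdBasis_transpose (i j : n) :
    (Matrix.single i j (1:ℝ))ᵀ = Matrix.single j i 1 := by
  ext a b
  simp [Matrix.single, and_comm]

lemma sandwich (i j : n) (Y : Matrix n n ℝ) :
    Matrix.single j i (1:ℝ) * Y * Matrix.single i j 1
      = Y i i • Matrix.single j j 1 := by
  ext a b
  simp only [Matrix.mul_apply, Matrix.single, Matrix.smul_apply, Matrix.of_apply,
    ite_and, boole_mul, mul_boole, Finset.sum_ite_eq, Finset.sum_ite_eq', Finset.mem_univ,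
    if_true, smul_eq_mul]
  by_cases h : j = a <;> by_cases h' : j = b <;> simp [h, h']

lemma combo_mul (E : Matrix n n ℝ) (hE : E * E = E) (a b c d : ℝ) :
    (a • (1:Matrix n n ℝ) + b • E) * (c • (1:Matrix n n ℝ) + d • E)
      = (a*c) • (1:Matrix n n ℝ) + (a*d + b*c + b*d) • E := by
  simp only [add_mul, mul_add, smul_mul_assoc, mul_smul_comm, one_mul, mul_one, hE,
    smul_smul]
  module

lemma key (i j : n) (hij : i ≠ j) (ε : ℝ) (hε : 0 < ε) (s : ℝ) (hs : -1 < s) :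
    let A : Matrix n n ℝ := Matrix.single i j 1
    let B : Matrix n n ℝ := ε • 1
    let X' : Matrix n n ℝ := 1 + s • Matrix.single j j 1
    Aᵀ * X' * A - Aᵀ * X' * B * (1 + Bᵀ * X' * B)⁻¹ * Bᵀ * X' * A
      = (1 / (1 + ε ^ 2)) • Matrix.single j j 1 := by
  intro A B X'
  set E : Matrix n n ℝ := Matrix.single j j 1 with hEdef
  have hE : E * E = E := by
    simp [hEdef]
  have hEii : E i i = 0 :=
    Matrix.single_apply_of_row_ne (Ne.symm hij) _ _ _
  have hEjj : E j j = 1 := Matrix.single_apply_same _ _ _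
  have hpos : (0:ℝ) < 1 + ε ^ 2 := by positivity
  have hpos2 : (0:ℝ) < 1 + ε ^ 2 * (1 + s) := by nlinarith
  have hX' : X' = (1:ℝ) • (1:Matrix n n ℝ) + s • E := by rw [one_smul]
  -- B is a scalar matrix
  have hBT : Bᵀ = B := by simp [B, Matrix.transpose_smul]
  -- M = 1 + Bᵀ X' B
  have hM : 1 + Bᵀ * X' * B = (1 + ε^2) • (1:Matrix n n ℝ) + (ε^2 * s) • E := by
    rw [hBT]
    simp only [B, X', Matrix.smul_mul, Matrix.mul_smul, one_mul, mul_one, mul_add,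
      smul_add, smul_smul]
    module
  set d : ℝ := -(ε^2 * s) / ((1 + ε^2) * (1 + ε^2 * (1 + s))) with hd
  have hMN : (1 + Bᵀ * X' * B) * ((1/(1+ε^2)) • (1:Matrix n n ℝ) + d • E) = 1 := by
    rw [hM, combo_mul E hE]
    have h1 : (1 + ε^2) * (1/(1+ε^2)) = 1 := by field_simp
    have h2 : (1 + ε^2) * d + ε^2 * s * (1/(1+ε^2)) + ε^2 * s * d = 0 := by
      rw [hd]; field_simp; ring
    rw [h1, h2]
    simp
  have hMinv : (1 + Bᵀ * X' * B)⁻¹ = (1/(1+ε^2)) • (1:Matrix n n ℝ) + d • E :=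
    Matrix.inv_eq_right_inv hMN
  -- first term
  have hAT : Aᵀ = Matrix.single j i 1 := stdBasis_transpose i j
  have ht1 : Aᵀ * X' * A = (X' i i) • E := by
    rw [hAT]; exact sandwich i j X'
  -- second term
  have ht2 : Aᵀ * X' * B * (1 + Bᵀ * X' * B)⁻¹ * Bᵀ * X' * A
      = (ε^2 * ((X' * ((1/(1+ε^2)) • (1:Matrix n n ℝ) + d • E) * X') i i)) • E := by
    rw [hMinv, hBT]
    have : A ᵀ * X' * B * ((1/(1+ε^2)) • (1:Matrix n n ℝ) + d • E) * B * X' * A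
        = (ε^2) • (Aᵀ * (X' * ((1/(1+ε^2)) • (1:Matrix n n ℝ) + d • E) * X') * A) := by
      simp only [B, Matrix.mul_smul, Matrix.smul_mul, Matrix.mul_one, smul_smul, mul_one]
      rw [← pow_two]
      ring_nf
      simp only [Matrix.mul_assoc]
    rw [this, hAT, sandwich i j, smul_smul]
  -- compute the middle entry
  have hmid : (X' * ((1/(1+ε^2)) • (1:Matrix n n ℝ) + d • E) * X') i i = 1/(1+ε^2) := by
    rw [hX', combo_mul E hE, combo_mul E hE]
    simp [hEii, hij]
  have hXii : X' i i = 1 := by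
    simp [hX', hEii, hij]
  rw [ht1, ht2, hmid, hXii, ← sub_smul]
  congr 1
  field_simp
  ring

end Aux

theorem riccati_rank_one_solution {n : Type*} [Fintype n] [DecidableEq n]
    (i j : n) (hij : i ≠ j) (ε : ℝ) (hε : 0 < ε) :
    let A : Matrix n n ℝ := Matrix.single i j 1
    let B : Matrix n n ℝ := ε • 1
    let X : Matrix n n ℝ := 1 + (1 / (1 + ε ^ 2)) • Matrix.single j j 1
    X.PosDef ∧
    (Aᵀ * X * A - Aᵀ * X * B * (1 + Bᵀ * X * B)⁻¹ * Bᵀ * X * A = X - 1) ∧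
    (∀ X' : Matrix n n ℝ, X'.PosDef →
      Aᵀ * X' * A - Aᵀ * X' * B * (1 + Bᵀ * X' * B)⁻¹ * Bᵀ * X' * A = X' - 1 →
      X' = X) := by
  intro A B X
  have hpos : (0:ℝ) < 1 + ε ^ 2 := by positivity
  have hc : -1 < 1 / (1 + ε ^ 2) := by
    have : (0:ℝ) < 1 / (1 + ε ^ 2) := by positivity
    linarith
  have hXdiag : X = Matrix.diagonal (fun k => 1 + if k = j then 1/(1+ε^2) else 0) := by
    ext a b
    by_cases hab : a = b
    · subst hab
      by_cases haj : a = j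
      · subst haj
        simp [X, Matrix.diagonal, Matrix.single]
      · simp only [X, Matrix.diagonal, Matrix.single, haj, Matrix.add_apply,
          Matrix.smul_apply, Matrix.of_apply, if_false, ite_and, smul_eq_mul]
        rw [if_neg (fun h : j = a => haj h.symm)]
        simp
    · have hne : ¬(j = a ∧ j = b) := fun h => hab (h.1.symm.trans h.2)
      simp [X, Matrix.diagonal, Matrix.single, hab, Matrix.one_apply_ne hab, hne]
  have hXpd : X.PosDef := by
    rw [hXdiag]
    rw [Matrix.posDef_diagonal_iff]
    intro k
    by_cases hk : k = j <;> simp [hk] <;> positivity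
  refine ⟨hXpd, ?_, ?_⟩
  · have := key i j hij ε hε (1/(1+ε^2)) hc
    simp only at this
    rw [show (Aᵀ * X * A - Aᵀ * X * B * (1 + Bᵀ * X * B)⁻¹ * Bᵀ * X * A : Matrix n n ℝ)
        = Aᵀ * (1 + (1/(1+ε^2)) • Matrix.single j j 1) * A
          - Aᵀ * (1 + (1/(1+ε^2)) • Matrix.single j j 1) * B
            * (1 + Bᵀ * (1 + (1/(1+ε^2)) • Matrix.single j j 1) * B)⁻¹
            * Bᵀ * (1 + (1/(1+ε^2)) • Matrix.single j j 1) * A from rfl, this]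
    simp [X]
  · intro X' hX' heq
    set E : Matrix n n ℝ := Matrix.single j j 1 with hEdef
    have hAT : Aᵀ = Matrix.single j i 1 := stdBasis_transpose i j
    have hBT : Bᵀ = B := by simp [B, Matrix.transpose_smul]
    set M : Matrix n n ℝ := (1 + Bᵀ * X' * B)⁻¹ with hMdef
    have ht1 : Aᵀ * X' * A = (X' i i) • E := by rw [hAT]; exact sandwich i j X'
    have ht2 : Aᵀ * X' * B * M * Bᵀ * X' * A
        = (ε^2 * ((X' * M * X') i i)) • E := by
      have h1 : Aᵀ * X' * B * M * Bᵀ * X' * A = (ε^2) • (Aᵀ * (X' * M * X') * A) := by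
        rw [hBT]
        show Aᵀ * X' * (ε • 1) * M * (ε • 1) * X' * A = _
        simp only [Matrix.mul_smul, Matrix.smul_mul, Matrix.mul_one, smul_smul]
        rw [← pow_two]
        simp only [Matrix.mul_assoc]
      rw [h1, hAT, sandwich i j, smul_smul]
    set t : ℝ := X' i i - ε^2 * ((X' * M * X') i i) with htdef
    have hsub : X' - 1 = t • E := by
      rw [← heq, ht1, ht2, htdef, sub_smul]
    have hform : X' = 1 + t • E := by
      rw [sub_eq_iff_eq_add'.mp hsub]
    have hjj : X' j j = 1 + t := by
      rw [hform]
      simp [hEdef, Matrix.single]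
    have htpos : -1 < t := by
      have h2 := hX'.2 (x := Finsupp.single j 1) (by simp)
      simp [Finsupp.sum_single_index] at h2
      rw [hjj] at h2
      linarith
    have hkey := key i j hij ε hε t htpos
    simp only at hkey
    rw [← hEdef, ← hform] at hkey
    have hleft : X' - 1 = (1 / (1 + ε ^ 2)) • E := by
      rw [← heq]
      exact hkey
    have : X' = 1 + (1 / (1 + ε ^ 2)) • E := by
      rw [sub_eq_iff_eq_add'.mp hleft]
    rw [this]
end

section
/- Let A = e_i e_jᵀ with i ≠ j, B = εI with ε > 0, and K* = −(ε/(1+ε²)) e_i e_jᵀ. For the closed-loop system x(k+1) = (A + B K*) x(k) with x(0) = e_j, the infinite-horizon cost Σ_{k≥1} ‖x(k)‖² + Σ_{k≥0} ‖u(k)‖² with u(k) = K* x(k) equals 1/(1+ε²). -/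
open Matrix

lemma stdBasis_mulVec_single {n : Type*} [Fintype n] [DecidableEq n]
    (i j : n) (v : n → ℝ) :
    (Matrix.single i j (1 : ℝ)).mulVec v = Pi.single i (v j) := by
  ext r
  simp [Matrix.mulVec, dotProduct, Matrix.single, Pi.single_apply,
    ite_and, eq_comm]

theorem optimal_cost_rank_one {n : Type*} [Fintype n] [DecidableEq n]
    (i j : n) (hij : i ≠ j) (ε : ℝ) (hε : 0 < ε)
    (x u : ℕ → n → ℝ)
    (hx0 : x 0 = Pi.single j 1)
    (hu : ∀ k, u k =
      ((-(ε / (1 + ε ^ 2))) • Matrix.single i j (1 : ℝ)).mulVec (x k))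
    (hx : ∀ k, x (k + 1) =
      (Matrix.single i j (1 : ℝ)).mulVec (x k) +
        (ε • (1 : Matrix n n ℝ)).mulVec (u k)) :
    (∑' k : ℕ, (x (k + 1)) ⬝ᵥ (x (k + 1))) + (∑' k : ℕ, (u k) ⬝ᵥ (u k)) =
      1 / (1 + ε ^ 2) := by
  have hd : (0:ℝ) < 1 + ε ^ 2 := by positivity
  have hd' : (1 + ε ^ 2) ≠ 0 := ne_of_gt hd
  -- u k = -(ε/(1+ε²)) • Pi.single i (x k j)
  have hu' : ∀ k, u k = Pi.single i (-(ε / (1 + ε ^ 2)) * x k j) := by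
    intro k
    rw [hu k, Matrix.smul_mulVec, stdBasis_mulVec_single]
    ext r
    simp [Pi.single_apply, mul_ite]
  have hx' : ∀ k, x (k + 1) = Pi.single i ((1 / (1 + ε ^ 2)) * x k j) := by
    intro k
    rw [hx k, hu' k, stdBasis_mulVec_single, Matrix.smul_mulVec,
      Matrix.one_mulVec]
    ext r
    simp only [Pi.add_apply, Pi.smul_apply, Pi.single_apply, smul_eq_mul]
    split_ifs with h
    · field_simp; ring
    · simp
  have hx1j : ∀ k, x (k + 1) j = 0 := by
    intro k
    rw [hx' k, Pi.single_apply, if_neg hij.symm]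
  have hx2 : ∀ k, x (k + 2) = 0 := by
    intro k
    rw [hx' (k+1), hx1j k]
    simp
  have hu1 : ∀ k, u (k + 1) = 0 := by
    intro k
    rw [hu' (k+1), hx1j k]
    simp
  have hx1 : x 1 = Pi.single i (1 / (1 + ε ^ 2)) := by
    rw [hx' 0, hx0, Pi.single_eq_same, mul_one]
  have hu0 : u 0 = Pi.single i (-(ε / (1 + ε ^ 2))) := by
    rw [hu' 0, hx0, Pi.single_eq_same, mul_one]
  have hsq : ∀ (a : ℝ), (Pi.single i a : n → ℝ) ⬝ᵥ (Pi.single i a) = a ^ 2 := by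
    intro a
    simp [dotProduct, Pi.single_apply, ite_and, sq]
  have t1 : (∑' k : ℕ, (x (k + 1)) ⬝ᵥ (x (k + 1))) = (1 / (1 + ε ^ 2)) ^ 2 := by
    rw [tsum_eq_single 0]
    · rw [hx1, hsq]
    · intro k hk
      obtain ⟨m, rfl⟩ := Nat.exists_eq_succ_of_ne_zero hk
      rw [show m + 1 + 1 = m + 2 from rfl, hx2 m]
      simp
  have t2 : (∑' k : ℕ, (u k) ⬝ᵥ (u k)) = (ε / (1 + ε ^ 2)) ^ 2 := by
    rw [tsum_eq_single 0]
    · rw [hu0, hsq, neg_pow]; ring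
    · intro k hk
      obtain ⟨m, rfl⟩ := Nat.exists_eq_succ_of_ne_zero hk
      rw [hu1 m]
      simp
  rw [t1, t2]
  field_simp
end
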